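/- Let Q be an integral polytope contained in an affine hyperplane H of ℝⁿ with vertex set {v₁,…,v_r}, and let v be an integral point not in H. Then the convex hull of {v₁,…,v_r,v} is integrally indecomposable if and only if gcd of all coordinates of the vectors v − v₁, …, v − v_r equals 1. -/

import Mathlib

open Pointwise

/-- A set in `ℝⁿ` is an integral polytope if it is the convex hull of a nonempty
finite set of integral points. -/
def IsIntegralPolytope {n : ℕ} (C : Set (Fin n → ℝ)) : Prop :=
  ∃ F : Finset (Fin n → ℤ), F.Nonempty ∧
    C = convexHull ℝ ((fun v : Fin n → ℤ => fun j => (v j : ℝ)) '' (F : Set (Fin n → ℤ)))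

/-- An integral polytope is integrally decomposable if it is the Minkowski sum of two
integral polytopes, each having at least two points. -/
def IntegrallyDecomposable {n : ℕ} (C : Set (Fin n → ℝ)) : Prop :=
  ∃ A B : Set (Fin n → ℝ), IsIntegralPolytope A ∧ IsIntegralPolytope B ∧
    A.Nontrivial ∧ B.Nontrivial ∧ C = A + B

lemma gcd_rat_aux {ι : Type*} (s : ℝ) (F : Finset ι) (f : ι → ℤ)
    (h : ∀ i ∈ F, ∃ k : ℤ, s * (f i : ℝ) = k) : ∃ k : ℤ, s * ((F.gcd f : ℤ) : ℝ) = k := by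
  classical
  induction F using Finset.induction with
  | empty => exact ⟨0, by simp⟩
  | insert a F hnotmem ih =>
    obtain ⟨k1, hk1⟩ := h a (Finset.mem_insert_self a F)
    obtain ⟨k2, hk2⟩ := ih (fun i hi => h i (Finset.mem_insert_of_mem hi))
    rw [Finset.gcd_insert]
    set g := F.gcd f with hg
    have hbez : (gcd (f a) g : ℤ) = (f a) * Int.gcdA (f a) g + g * Int.gcdB (f a) g := by
      rw [← Int.coe_gcd]; exact Int.gcd_eq_gcd_ab (f a) g
    refine ⟨k1 * Int.gcdA (f a) g + k2 * Int.gcdB (f a) g, ?_⟩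
    rw [hbez]
    push_cast
    rw [← hk1, ← hk2]
    ring

lemma aux_main {n r : ℕ} (hr : 0 < r) (vr : Fin r → (Fin n → ℝ)) (wr : Fin n → ℝ)
    (Q : Set (Fin n → ℝ)) (hQ : Q = convexHull ℝ (Set.range vr))
    (hvert : Set.range vr = Set.extremePoints ℝ Q)
    (φ : (Fin n → ℝ) →ₗ[ℝ] ℝ) (c : ℝ) (hQH : ∀ i, φ (vr i) = c) (hlt : c < φ wr)
    (A B : Set (Fin n → ℝ)) (FA FB : Finset (Fin n → ℤ))
    (hFAne : FA.Nonempty) (hFBne : FB.Nonempty)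
    (hFA : A = convexHull ℝ ((fun z : Fin n → ℤ => fun j => (z j : ℝ)) '' (FA : Set (Fin n → ℤ))))
    (hFB : B = convexHull ℝ ((fun z : Fin n → ℤ => fun j => (z j : ℝ)) '' (FB : Set (Fin n → ℤ))))
    (hAnt : A.Nontrivial) (hBnt : B.Nontrivial)
    (hP : convexHull ℝ (Set.range vr ∪ {wr}) = A + B) :
    ∃ s : ℝ, 0 < s ∧ s < 1 ∧ ∀ i, ∃ z : Fin n → ℤ,
      (fun j => (z j : ℝ)) = s • (wr - vr i) := by
  classical
  set cf : (Fin n → ℤ) → (Fin n → ℝ) := fun z j => (z j : ℝ) with hcf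
  set P : Set (Fin n → ℝ) := convexHull ℝ (Set.range vr ∪ {wr}) with hPdef
  have hne : Nonempty (Fin r) := ⟨⟨0, hr⟩⟩
  -- basic facts about Q and P
  have hQc : ∀ q ∈ Q, φ q = c := by
    intro q hq
    have hsub : Q ⊆ {x | φ x = c} := by
      rw [hQ]
      exact convexHull_min (by rintro x ⟨i, rfl⟩; exact hQH i) (convex_hyperplane φ.isLinear c)
    exact hsub hq
  have hQP : Q ⊆ P := by
    rw [hQ, hPdef]; exact convexHull_mono Set.subset_union_left
  have hwrP : wr ∈ P := subset_convexHull ℝ _ (Or.inr rfl)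
  have hQne : Q.Nonempty := ⟨vr ⟨0, hr⟩, hQ ▸ subset_convexHull ℝ _ ⟨⟨0, hr⟩, rfl⟩⟩
  have hh : (0:ℝ) < φ wr - c := by linarith
  -- slice representation
  have hslice : ∀ x ∈ P, ∃ θ : ℝ, 0 ≤ θ ∧ θ ≤ 1 ∧ ∃ q ∈ Q, x = θ • wr + (1 - θ) • q := by
    intro x hx
    rw [hPdef, Set.union_singleton, convexHull_insert (Set.range_nonempty vr),
      mem_convexJoin] at hx
    obtain ⟨a, ha, q, hq, hseg⟩ := hx
    rw [Set.mem_singleton_iff] at ha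
    subst ha
    obtain ⟨θ, μ, hθ, hμ, hsum, heq⟩ := hseg
    exact ⟨θ, hθ, by linarith, q, hQ ▸ hq, by rw [← heq]; congr 1; · rw [show (1:ℝ) - θ = μ by linarith]⟩
  have hφval : ∀ (θ : ℝ) (q : Fin n → ℝ), q ∈ Q → φ (θ • wr + (1 - θ) • q) = c + θ * (φ wr - c) := by
    intro θ q hq
    rw [map_add, map_smul, map_smul, hQc q hq]
    simp only [smul_eq_mul]; ring
  have hrep : ∀ x ∈ P, ∀ t : ℝ, φ x = c + t * (φ wr - c) →
      0 ≤ t ∧ t ≤ 1 ∧ ∃ q ∈ Q, x = t • wr + (1 - t) • q := by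
    intro x hx t ht
    obtain ⟨θ, h0, h1, q, hq, hxeq⟩ := hslice x hx
    have hφx : φ x = c + θ * (φ wr - c) := by rw [hxeq]; exact hφval θ q hq
    have hθt : θ = t := by
      have := ht.symm.trans hφx
      have h2 : t * (φ wr - c) = θ * (φ wr - c) := by linarith
      exact (mul_right_cancel₀ (by linarith) h2).symm
    subst hθt
    exact ⟨h0, h1, q, hq, hxeq⟩
  have hminP : ∀ x ∈ P, c ≤ φ x := by
    intro x hx
    obtain ⟨θ, h0, h1, q, hq, hxeq⟩ := hslice x hx
    have := hφval θ q hq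
    rw [hxeq, this]
    nlinarith
  have hmaxP : ∀ x ∈ P, φ x ≤ φ wr := by
    intro x hx
    obtain ⟨θ, h0, h1, q, hq, hxeq⟩ := hslice x hx
    have := hφval θ q hq
    rw [hxeq, this]
    nlinarith
  have htop : ∀ x ∈ P, φ x = φ wr → x = wr := by
    intro x hx hxφ
    obtain ⟨-, -, q, hq, hxeq⟩ := hrep x hx 1 (by rw [hxφ]; ring)
    rw [hxeq]; simp
  have hbotQ : ∀ x ∈ P, φ x = c → x ∈ Q := by
    intro x hx hxφ
    obtain ⟨-, -, q, hq, hxeq⟩ := hrep x hx 0 (by rw [hxφ]; ring)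
    rw [hxeq]; simpa using hq
  -- finsets of real generators
  set TA : Finset (Fin n → ℝ) := FA.image cf with hTA
  set TB : Finset (Fin n → ℝ) := FB.image cf with hTB
  have hTAne : TA.Nonempty := hFAne.image cf
  have hTBne : TB.Nonempty := hFBne.image cf
  have hAhull : A = convexHull ℝ (TA : Set (Fin n → ℝ)) := by rw [hFA, hTA, Finset.coe_image]
  have hBhull : B = convexHull ℝ (TB : Set (Fin n → ℝ)) := by rw [hFB, hTB, Finset.coe_image]
  have hTAsub : (TA : Set (Fin n → ℝ)) ⊆ A := hAhull ▸ subset_convexHull ℝ _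
  have hTBsub : (TB : Set (Fin n → ℝ)) ⊆ B := hBhull ▸ subset_convexHull ℝ _
  -- extrema of φ on generators
  set ΦA : Finset ℝ := TA.image φ with hΦA
  set ΦB : Finset ℝ := TB.image φ with hΦB
  have hΦAne : ΦA.Nonempty := hTAne.image φ
  have hΦBne : ΦB.Nonempty := hTBne.image φ
  set MA := ΦA.max' hΦAne with hMA
  set cA := ΦA.min' hΦAne with hcA
  set MB := ΦB.max' hΦBne with hMB
  set cB := ΦB.min' hΦBne with hcB
  obtain ⟨a, haTA, haφ⟩ : ∃ a ∈ TA, φ a = MA := by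
    exact Finset.mem_image.1 (ΦA.max'_mem hΦAne)
  obtain ⟨b0, hbTB, hbφ⟩ : ∃ b ∈ TB, φ b = MB := by
    exact Finset.mem_image.1 (ΦB.max'_mem hΦBne)
  obtain ⟨gA, hgATA, hgAφ⟩ : ∃ g ∈ TA, φ g = cA := by
    exact Finset.mem_image.1 (ΦA.min'_mem hΦAne)
  obtain ⟨gB, hgBTB, hgBφ⟩ : ∃ g ∈ TB, φ g = cB := by
    exact Finset.mem_image.1 (ΦB.min'_mem hΦBne)
  -- bounds on A and B
  have hAle : ∀ x ∈ A, φ x ≤ MA := by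
    intro x hx
    rw [hAhull] at hx
    refine convexHull_min ?_ (convex_halfSpace_le φ.isLinear MA) hx
    intro g hg
    exact ΦA.le_max' _ (Finset.mem_image_of_mem φ hg)
  have hAge : ∀ x ∈ A, cA ≤ φ x := by
    intro x hx
    rw [hAhull] at hx
    refine convexHull_min ?_ (convex_halfSpace_ge φ.isLinear cA) hx
    intro g hg
    exact ΦA.min'_le _ (Finset.mem_image_of_mem φ hg)
  have hBle : ∀ x ∈ B, φ x ≤ MB := by
    intro x hx
    rw [hBhull] at hx
    refine convexHull_min ?_ (convex_halfSpace_le φ.isLinear MB) hx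
    intro g hg
    exact ΦB.le_max' _ (Finset.mem_image_of_mem φ hg)
  have hBge : ∀ x ∈ B, cB ≤ φ x := by
    intro x hx
    rw [hBhull] at hx
    refine convexHull_min ?_ (convex_halfSpace_ge φ.isLinear cB) hx
    intro g hg
    exact ΦB.min'_le _ (Finset.mem_image_of_mem φ hg)
  have haA : a ∈ A := hTAsub haTA
  have hbB : b0 ∈ B := hTBsub hbTB
  have hgAA : gA ∈ A := hTAsub hgATA
  have hgBB : gB ∈ B := hTBsub hgBTB
  -- sum relations
  have hMsum : MA + MB = φ wr := by
    refine le_antisymm ?_ ?_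
    · have hmem : a + b0 ∈ P := by rw [hP]; exact Set.add_mem_add haA hbB
      have := hmaxP _ hmem
      rw [map_add, haφ, hbφ] at this
      exact this
    · have : wr ∈ A + B := hP ▸ hwrP
      obtain ⟨x, hx, y, hy, hxy⟩ := this
      calc φ wr = φ x + φ y := by rw [← hxy, map_add]
        _ ≤ MA + MB := add_le_add (hAle x hx) (hBle y hy)
  have hcsum : cA + cB = c := by
    refine le_antisymm ?_ ?_
    · have hv0Q : vr ⟨0, hr⟩ ∈ Q := hQ ▸ subset_convexHull ℝ _ ⟨⟨0, hr⟩, rfl⟩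
      have : vr ⟨0, hr⟩ ∈ A + B := hP ▸ hQP hv0Q
      obtain ⟨x, hx, y, hy, hxy⟩ := this
      have hc : φ (vr ⟨0, hr⟩) = c := hQH _
      calc cA + cB ≤ φ x + φ y := add_le_add (hAge x hx) (hBge y hy)
        _ = c := by rw [← map_add]; exact (congrArg φ hxy).trans hc
    · have hmem : gA + gB ∈ P := by rw [hP]; exact Set.add_mem_add hgAA hgBB
      have := hminP _ hmem
      rw [map_add, hgAφ, hgBφ] at this
      exact this
  -- apex decomposition
  have hwa : a + b0 = wr := by
    apply htop
    · rw [hP]; exact Set.add_mem_add haA hbB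
    · rw [map_add, haφ, hbφ]; exact hMsum
  have htopA : ∀ x ∈ A, φ x = MA → x = a := by
    intro x hx hxφ
    have hmem : x + b0 ∈ P := by rw [hP]; exact Set.add_mem_add hx hbB
    have h1 : x + b0 = wr := htop _ hmem (by rw [map_add, hxφ, hbφ]; exact hMsum)
    exact add_right_cancel (h1.trans hwa.symm)
  have htopB : ∀ y ∈ B, φ y = MB → y = b0 := by
    intro y hy hyφ
    have hmem : a + y ∈ P := by rw [hP]; exact Set.add_mem_add haA hy
    have h1 : a + y = wr := htop _ hmem (by rw [map_add, haφ, hyφ]; exact hMsum)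
    exact add_left_cancel (h1.trans hwa.symm)
  -- nondegeneracy
  have hcAMA : cA < MA := by
    rcases eq_or_lt_of_le (show cA ≤ MA from haφ ▸ hAge a haA) with heq | h
    · exfalso
      obtain ⟨x, hx, y, hy, hne⟩ := hAnt
      have hx' : x = a := htopA x hx (le_antisymm (hAle x hx) (heq ▸ hAge x hx))
      have hy' : y = a := htopA y hy (le_antisymm (hAle y hy) (heq ▸ hAge y hy))
      exact hne (hx'.trans hy'.symm)
    · exact h
  have hcBMB : cB < MB := by
    rcases eq_or_lt_of_le (show cB ≤ MB from hbφ ▸ hBge b0 hbB) with heq | h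
    · exfalso
      obtain ⟨x, hx, y, hy, hne⟩ := hBnt
      have hx' : x = b0 := htopB x hx (le_antisymm (hBle x hx) (heq ▸ hBge x hx))
      have hy' : y = b0 := htopB y hy (le_antisymm (hBle y hy) (heq ▸ hBge y hy))
      exact hne (hx'.trans hy'.symm)
    · exact h
  set s : ℝ := (MA + cB - c) / (φ wr - c) with hs
  have hsh : s * (φ wr - c) = MA + cB - c := div_mul_cancel₀ _ (ne_of_gt hh)
  have hs0 : 0 < s := div_pos (by linarith) hh
  have hs1 : s < 1 := (div_lt_one hh).2 (by linarith)
  refine ⟨s, hs0, hs1, ?_⟩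
  intro i
  have hviQ : vr i ∈ Q := hQ ▸ subset_convexHull ℝ _ ⟨i, rfl⟩
  have hviAB : vr i ∈ A + B := hP ▸ hQP hviQ
  obtain ⟨xa, hxaA, xb, hxbB, hxab0⟩ := hviAB
  have hxab : xa + xb = vr i := hxab0
  have hφs : φ xa + φ xb = c := by
    rw [← map_add]; exact (congrArg φ hxab).trans (hQH i)
  have hφxa : φ xa = cA := by
    have h1 := hAge xa hxaA; have h2 := hBge xb hxbB; linarith
  have hφxb : φ xb = cB := by linarith
  -- vr i is extreme in P
  have hvext : vr i ∈ Set.extremePoints ℝ Q := hvert ▸ ⟨i, rfl⟩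
  have hviext : ∀ x1 ∈ P, ∀ x2 ∈ P, vr i ∈ openSegment ℝ x1 x2 → x1 = vr i ∧ x2 = vr i := by
    intro x1 h1 x2 h2 hseg
    obtain ⟨t1, t2, ht1, ht2, hts, heq⟩ := hseg
    have hφeq : t1 * φ x1 + t2 * φ x2 = c := by
      have h3 := congrArg φ heq
      rw [map_add, map_smul, map_smul] at h3
      simpa [hQH i] using h3
    have hb1 : c ≤ φ x1 := hminP _ h1
    have hb2 : c ≤ φ x2 := hminP _ h2
    have h4 : t1 * c + t2 * c = c := by rw [← add_mul, hts, one_mul]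
    have e0 : t1 * (φ x1 - c) + t2 * (φ x2 - c) = 0 := by linarith [hφeq, h4]
    have p1 : 0 ≤ t1 * (φ x1 - c) := mul_nonneg ht1.le (by linarith)
    have p2 : 0 ≤ t2 * (φ x2 - c) := mul_nonneg ht2.le (by linarith)
    have z1 : t1 * (φ x1 - c) = 0 := by linarith
    have z2 : t2 * (φ x2 - c) = 0 := by linarith
    have hφ1 : φ x1 = c := by
      rcases mul_eq_zero.1 z1 with h | h
      · exact absurd h (ne_of_gt ht1)
      · linarith
    have hφ2 : φ x2 = c := by
      rcases mul_eq_zero.1 z2 with h | h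
      · exact absurd h (ne_of_gt ht2)
      · linarith
    exact (mem_extremePoints.1 hvext).2 _ (hbotQ _ h1 hφ1) _ (hbotQ _ h2 hφ2) ⟨t1, t2, ht1, ht2, hts, heq⟩
  -- two slice representations
  have h1mem : xa + b0 ∈ P := by rw [hP]; exact Set.add_mem_add hxaA hbB
  have h1φ : φ (xa + b0) = c + (1 - s) * (φ wr - c) := by
    rw [map_add, hφxa, hbφ]
    have hexp : (1 - s) * (φ wr - c) = (φ wr - c) - s * (φ wr - c) := by ring
    linarith
  obtain ⟨-, -, q1, hq1, heq1⟩ := hrep _ h1mem (1 - s) h1φ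
  rw [show (1 : ℝ) - (1 - s) = s by ring] at heq1
  have h2mem : a + xb ∈ P := by rw [hP]; exact Set.add_mem_add haA hxbB
  have h2φ : φ (a + xb) = c + s * (φ wr - c) := by
    rw [map_add, haφ, hφxb]; linarith
  obtain ⟨-, -, q2, hq2, heq2⟩ := hrep _ h2mem s h2φ
  -- combine
  have hEq : vr i + wr = ((1 - s) • wr + s • q1) + (s • wr + (1 - s) • q2) := by
    rw [← heq1, ← heq2, ← hxab, ← hwa]; abel
  have hsum2 : vr i = s • q1 + (1 - s) • q2 := by
    linear_combination (norm := module) hEq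
  obtain ⟨hq1v, hq2v⟩ :=
    (mem_extremePoints.1 hvext).2 _ hq1 _ hq2 ⟨s, 1 - s, hs0, by linarith, by ring, hsum2.symm⟩
  rw [hq1v] at heq1
  have hkey : a - xa = s • (wr - vr i) := by
    linear_combination (norm := module) hwa - heq1
  -- xa is extreme in A
  have hxaext : xa ∈ Set.extremePoints ℝ A := by
    refine mem_extremePoints.2 ⟨hxaA, ?_⟩
    intro x1 hx1 x2 hx2 hseg
    obtain ⟨t1, t2, ht1, ht2, hts, heq⟩ := hseg
    have heq' : t1 • x1 + t2 • x2 = xa := heq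
    have hseg2 : vr i ∈ openSegment ℝ (x1 + xb) (x2 + xb) := by
      refine ⟨t1, t2, ht1, ht2, hts, ?_⟩
      have hmod : t1 • (x1 + xb) + t2 • (x2 + xb) = (t1 • x1 + t2 • x2) + (t1 + t2) • xb := by
        module
      rw [hmod, heq', hts, one_smul, hxab]
    have hx1P : x1 + xb ∈ P := by rw [hP]; exact Set.add_mem_add hx1 hxbB
    have hx2P : x2 + xb ∈ P := by rw [hP]; exact Set.add_mem_add hx2 hxbB
    obtain ⟨e1, e2⟩ := hviext _ hx1P _ hx2P hseg2
    constructor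
    · exact add_right_cancel (e1.trans hxab.symm)
    · exact add_right_cancel (e2.trans hxab.symm)
  -- integrality
  rw [hFA] at hxaext
  obtain ⟨za, hzaFA, hza⟩ := extremePoints_convexHull_subset hxaext
  obtain ⟨zA, hzAFA, hzA⟩ := Finset.mem_image.1 haTA
  refine ⟨zA - za, ?_⟩
  have hcast : (fun j => ((zA - za) j : ℝ)) = a - xa := by
    funext j
    have h1 : a j = (zA j : ℝ) := by rw [← hzA, hcf]
    have h2 : xa j = (za j : ℝ) := by rw [← hza, hcf]
    simp [Pi.sub_apply, h1, h2]
  rw [hcast, hkey]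

/-- Affine map `x ↦ α • x + t`. -/
noncomputable def amap {n : ℕ} (α : ℝ) (t : Fin n → ℝ) : (Fin n → ℝ) →ᵃ[ℝ] (Fin n → ℝ) where
  toFun := fun x => α • x + t
  linear := α • LinearMap.id
  map_vadd' := by
    intro p vv
    simp only [LinearMap.smul_apply, LinearMap.id_coe, id_eq]
    show α • (vv + p) + t = α • vv + (α • p + t)
    rw [smul_add]; abel

lemma decomp_aux {n r : ℕ} (hr : 0 < r) (v : Fin r → (Fin n → ℤ)) (w : Fin n → ℤ)
    (vr : Fin r → (Fin n → ℝ)) (hvr : vr = fun i j => (v i j : ℝ))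
    (wr : Fin n → ℝ) (hwr : wr = fun j => (w j : ℝ))
    (d : ℤ) (hd2 : 2 ≤ d) (hdvd : ∀ i j, d ∣ (w j - v i j))
    (hne : w ≠ v ⟨0, hr⟩) :
    IntegrallyDecomposable (convexHull ℝ (Set.range vr ∪ {wr})) := by
  classical
  set cf : (Fin n → ℤ) → (Fin n → ℝ) := fun z j => (z j : ℝ) with hcf
  set u : Fin r → (Fin n → ℤ) := fun i j => (w j - v i j) / d with hu
  have hud : ∀ i j, d * u i j = w j - v i j := fun i j => Int.mul_ediv_cancel' (hdvd i j)
  have hdR : (2:ℝ) ≤ (d:ℝ) := by exact_mod_cast hd2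
  have hdne : (d:ℝ) ≠ 0 := by linarith
  set FA : Finset (Fin n → ℤ) := insert w (Finset.image (fun i => v i + u i) Finset.univ) with hFA
  set FB : Finset (Fin n → ℤ) := insert 0 (Finset.image (fun i => -u i) Finset.univ) with hFB
  set A : Set (Fin n → ℝ) := convexHull ℝ (cf '' (FA : Set (Fin n → ℤ))) with hA
  set B : Set (Fin n → ℝ) := convexHull ℝ (cf '' (FB : Set (Fin n → ℤ))) with hB
  have hcfinj : Function.Injective cf := by
    intro x y hxy
    funext j
    have := congrFun hxy j
    simpa [hcf] using this
  have hu0 : u ⟨0, hr⟩ ≠ 0 := by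
    intro h0
    apply hne
    funext j
    have := hud ⟨0, hr⟩ j
    rw [h0] at this
    simp at this
    omega
  set i0 : Fin r := ⟨0, hr⟩ with hi0
  -- the two affine maps
  set f : (Fin n → ℝ) →ᵃ[ℝ] (Fin n → ℝ) := amap (((d:ℝ) - 1)/d) ((1/(d:ℝ)) • wr) with hf
  set g : (Fin n → ℝ) →ᵃ[ℝ] (Fin n → ℝ) := amap (1/(d:ℝ)) (-((1/(d:ℝ)) • wr)) with hg
  have hfx : ∀ x, f x = (((d:ℝ) - 1)/d) • x + (1/(d:ℝ)) • wr := fun x => rfl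
  have hgx : ∀ x, g x = (1/(d:ℝ)) • x - (1/(d:ℝ)) • wr := by
    intro x; show (1/(d:ℝ)) • x + -((1/(d:ℝ)) • wr) = _; abel
  set P : Set (Fin n → ℝ) := convexHull ℝ (Set.range vr ∪ {wr}) with hP
  -- image computations
  have hurj : ∀ i j, (u i j : ℝ) = ((w j : ℝ) - (v i j : ℝ))/d := by
    intro i j
    have := hud i j
    have : (d:ℝ) * (u i j : ℝ) = (w j : ℝ) - (v i j : ℝ) := by exact_mod_cast this
    field_simp
    linarith
  have hfvr : ∀ i, f (vr i) = cf (v i + u i) := by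
    intro i
    funext j
    rw [hfx]
    simp only [hcf, hvr, Pi.add_apply, Pi.smul_apply, smul_eq_mul]
    push_cast
    rw [hurj i j, hwr]
    field_simp
    ring
  have hfwr : f wr = wr := by
    rw [hfx]
    funext j
    simp only [Pi.add_apply, Pi.smul_apply, smul_eq_mul]
    field_simp
    ring
  have hgvr : ∀ i, g (vr i) = cf (-u i) := by
    intro i
    funext j
    rw [hgx]
    simp only [hcf, hvr, Pi.sub_apply, Pi.smul_apply, Pi.neg_apply, smul_eq_mul]
    push_cast
    rw [hurj i j, hwr]
    field_simp
    ring
  have hgwr : g wr = (0 : Fin n → ℝ) := by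
    rw [hgx]; abel
  have hcfw : cf w = wr := by rw [hcf, hwr]
  have hgenA : f '' (Set.range vr ∪ {wr}) = cf '' (FA : Set (Fin n → ℤ)) := by
    ext x
    constructor
    · rintro ⟨y, (⟨i, rfl⟩ | rfl), rfl⟩
      · exact ⟨v i + u i, by simp [hFA], (hfvr i).symm⟩
      · exact ⟨w, by simp [hFA], by rw [hfwr, hcfw]⟩
    · rintro ⟨z, hz, rfl⟩
      rw [hFA] at hz
      simp only [Finset.coe_insert, Set.mem_insert_iff, Finset.coe_image, Finset.coe_univ,
        Set.image_univ, Set.mem_range] at hz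
      rcases hz with rfl | ⟨i, rfl⟩
      · exact ⟨wr, Or.inr rfl, by rw [hfwr, hcfw]⟩
      · exact ⟨vr i, Or.inl ⟨i, rfl⟩, hfvr i⟩
  have hgenB : g '' (Set.range vr ∪ {wr}) = cf '' (FB : Set (Fin n → ℤ)) := by
    ext x
    constructor
    · rintro ⟨y, (⟨i, rfl⟩ | rfl), rfl⟩
      · exact ⟨-u i, by simp [hFB], (hgvr i).symm⟩
      · refine ⟨0, by simp [hFB], ?_⟩
        rw [hgwr]
        funext j
        simp [hcf]
    · rintro ⟨z, hz, rfl⟩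
      rw [hFB] at hz
      simp only [Finset.coe_insert, Set.mem_insert_iff, Finset.coe_image, Finset.coe_univ,
        Set.image_univ, Set.mem_range] at hz
      rcases hz with rfl | ⟨i, rfl⟩
      · refine ⟨wr, Or.inr rfl, ?_⟩
        rw [hgwr]
        funext j
        simp [hcf]
      · exact ⟨vr i, Or.inl ⟨i, rfl⟩, hgvr i⟩
  have hAP : A = f '' P := by
    rw [hA, hP, AffineMap.image_convexHull, hgenA]
  have hBP : B = g '' P := by
    rw [hB, hP, AffineMap.image_convexHull, hgenB]
  -- Minkowski sum equality
  have hconvP : Convex ℝ P := convex_convexHull ℝ _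
  have hα0 : (0:ℝ) ≤ ((d:ℝ) - 1)/d := by apply div_nonneg <;> linarith
  have hβ0 : (0:ℝ) < 1/(d:ℝ) := by
    apply one_div_pos.2; linarith
  have hαβ : ((d:ℝ) - 1)/d + 1/(d:ℝ) = 1 := by field_simp; ring
  have hsum : P = A + B := by
    rw [hAP, hBP]
    ext x
    constructor
    · intro hx
      refine ⟨f x, ⟨x, hx, rfl⟩, g x, ⟨x, hx, rfl⟩, ?_⟩
      show f x + g x = x
      rw [hfx, hgx]
      have hmod : (((d:ℝ)-1)/d) • x + (1/(d:ℝ)) • wr + ((1/(d:ℝ)) • x - (1/(d:ℝ)) • wr)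
          = ((((d:ℝ)-1)/d) + 1/(d:ℝ)) • x := by module
      rw [hmod, hαβ, one_smul]
    · rintro ⟨x1, ⟨p1, hp1, rfl⟩, x2, ⟨p2, hp2, rfl⟩, rfl⟩
      show f p1 + g p2 ∈ P
      have hmod : f p1 + g p2 = (((d:ℝ)-1)/d) • p1 + (1/(d:ℝ)) • p2 := by
        rw [hfx, hgx]; module
      rw [hmod]
      exact hconvP hp1 hp2 hα0 hβ0.le hαβ
  have hsubA : cf '' (FA : Set (Fin n → ℤ)) ⊆ A := hA ▸ subset_convexHull ℝ _
  have hsubB : cf '' (FB : Set (Fin n → ℤ)) ⊆ B := hB ▸ subset_convexHull ℝ _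
  have hAnt : A.Nontrivial := by
    refine ⟨cf w, hsubA ⟨w, by simp [hFA], rfl⟩,
      cf (v i0 + u i0), hsubA ⟨v i0 + u i0, by simp [hFA], rfl⟩, ?_⟩
    intro hEq
    have heq2 := hcfinj hEq
    apply hne
    funext j
    have h1 := congrFun heq2 j
    simp only [Pi.add_apply] at h1
    have h2 := hud i0 j
    have h3 : (d - 1) * u i0 j = 0 := by linarith
    have h4 : u i0 j = 0 := by
      rcases mul_eq_zero.1 h3 with h | h
      · omega
      · exact h
    show w j = v i0 j
    omega
  have hBnt : B.Nontrivial := by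
    refine ⟨cf 0, hsubB ⟨0, by simp [hFB], rfl⟩,
      cf (-u i0), hsubB ⟨-u i0, by simp [hFB], rfl⟩, ?_⟩
    intro hEq
    have heq2 := hcfinj hEq
    exact hu0 (neg_eq_zero.1 heq2.symm)
  exact ⟨A, B, ⟨FA, Finset.insert_nonempty _ _, by rw [hA, hcf]⟩,
    ⟨FB, Finset.insert_nonempty _ _, by rw [hB, hcf]⟩, hAnt, hBnt, hsum⟩


theorem stmt_12 (n r : ℕ) (hr : 0 < r) (v : Fin r → (Fin n → ℤ)) (w : Fin n → ℤ)
    (vr : Fin r → (Fin n → ℝ)) (hvr : vr = fun i j => (v i j : ℝ))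
    (wr : Fin n → ℝ) (hwr : wr = fun j => (w j : ℝ))
    (Q : Set (Fin n → ℝ)) (hQ : Q = convexHull ℝ (Set.range vr))
    (hvert : Set.range vr = Set.extremePoints ℝ Q)
    (φ : (Fin n → ℝ) →ₗ[ℝ] ℝ) (c : ℝ)
    (hQH : ∀ i, φ (vr i) = c) (hwH : φ wr ≠ c) :
    ¬ IntegrallyDecomposable (convexHull ℝ (Set.range vr ∪ {wr})) ↔
      Finset.univ.gcd (fun q : Fin r × Fin n => w q.2 - v q.1 q.2) = 1 := by
  constructor
  · intro hindec
    by_contra hgcd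
    apply hindec
    set d : ℤ := Finset.univ.gcd (fun q : Fin r × Fin n => w q.2 - v q.1 q.2) with hd
    have hne : w ≠ v ⟨0, hr⟩ := by
      intro h
      apply hwH
      have hwv : wr = vr ⟨0, hr⟩ := by rw [hwr, hvr, h]
      rw [hwv]
      exact hQH _
    have hdvd : ∀ i j, d ∣ (w j - v i j) := fun i j =>
      Finset.gcd_dvd (Finset.mem_univ ((i, j) : Fin r × Fin n))
    have hd0 : d ≠ 0 := by
      intro h0
      apply hne
      funext j
      have hg0 : Finset.univ.gcd (fun q : Fin r × Fin n => w q.2 - v q.1 q.2) = 0 := by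
        rw [← hd]; exact h0
      have h1 := Finset.gcd_eq_zero_iff.1 hg0 (⟨0, hr⟩, j) (Finset.mem_univ _)
      simp only at h1
      omega
    have hdnn : 0 ≤ d := Int.nonneg_of_normalize_eq_self Finset.normalize_gcd
    have hd2 : 2 ≤ d := by omega
    exact decomp_aux hr v w vr hvr wr hwr d hd2 hdvd hne
  · intro hgcd hdec
    obtain ⟨A, B, ⟨FA, hFAne, hFA⟩, ⟨FB, hFBne, hFB⟩, hAnt, hBnt, hP⟩ := hdec
    have hsz : ∃ s : ℝ, 0 < s ∧ s < 1 ∧ ∀ i, ∃ z : Fin n → ℤ,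
        (fun j => (z j : ℝ)) = s • (wr - vr i) := by
      rcases lt_or_gt_of_ne hwH with hlt | hgt
      · refine aux_main hr vr wr Q hQ hvert (-φ) (-c) (fun i => by simp [hQH i]) ?_
          A B FA FB hFAne hFBne hFA hFB hAnt hBnt hP
        show -c < (-φ) wr
        simp only [LinearMap.neg_apply]
        linarith
      · exact aux_main hr vr wr Q hQ hvert φ c hQH hgt A B FA FB hFAne hFBne hFA hFB
          hAnt hBnt hP
    obtain ⟨s, hs0, hs1, hz⟩ := hsz
    have hprod : ∀ q ∈ (Finset.univ : Finset (Fin r × Fin n)),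
        ∃ k : ℤ, s * (((w q.2 - v q.1 q.2) : ℤ) : ℝ) = k := by
      intro q _
      obtain ⟨z, hzq⟩ := hz q.1
      refine ⟨z q.2, ?_⟩
      have h1 := congrFun hzq q.2
      simp only [Pi.smul_apply, Pi.sub_apply, smul_eq_mul, hwr, hvr] at h1
      push_cast
      exact h1.symm
    obtain ⟨k, hk⟩ := gcd_rat_aux s Finset.univ _ hprod
    rw [hgcd] at hk
    norm_num at hk
    have h1 : 0 < k := by exact_mod_cast hk ▸ hs0
    have h2 : k < 1 := by exact_mod_cast hk ▸ hs1
    omega
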